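/- Let A be the set of positive integers ≡ 3 mod 4, B the set of positive integers ≡ 1 mod 4, and p₁, p₂, … the primes ≡ 3 mod 4 in increasing order. Let C_N = B \ ⋃_{i=1}^N p_i·A. Then the natural density of C_N in B tends to 0 as N → ∞. -/

import Mathlib

open Filter

noncomputable def cnt (A : Set ℕ) (x : ℕ) : ℕ := (A ∩ Set.Iio x).ncard

/-- `A` has natural density `α` in `B`. -/
def relDensity (A B : Set ℕ) (α : ℝ) : Prop :=
  Filter.Tendsto (fun x => (cnt A x : ℝ) / (cnt B x : ℝ)) Filter.atTop (nhds α)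

open scoped Classical in
lemma cnt_eq_card (S : Set ℕ) (x : ℕ) :
    cnt S x = ((Finset.range x).filter (fun n => n ∈ S)).card := by
  rw [cnt, ← Set.ncard_coe_finset]
  congr 1
  ext n
  simp [Set.mem_Iio, and_comm]

open scoped Classical in
lemma cnt_succ (S : Set ℕ) (x : ℕ) :
    cnt S (x + 1) = cnt S x + (if x ∈ S then 1 else 0) := by
  rw [cnt_eq_card, cnt_eq_card, Finset.range_add_one, Finset.filter_insert]
  split
  · rw [Finset.card_insert_of_notMem (by simp)]
  · simp

lemma cnt_zero (S : Set ℕ) : cnt S 0 = 0 := by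
  simp [cnt, show Set.Iio 0 = (∅ : Set ℕ) from by ext n; simp]

open scoped Classical in
lemma cnt_add_period (S : Set ℕ) (M : ℕ) (hper : ∀ n, n + M ∈ S ↔ n ∈ S) (x : ℕ) :
    cnt S (x + M) = cnt S x + cnt S M := by
  induction x with
  | zero => simp [cnt_zero]
  | succ n ih =>
    have h4 : n + 1 + M = (n + M) + 1 := by ring
    rw [h4, cnt_succ, ih, cnt_succ]
    have h5 : (if n + M ∈ S then 1 else 0) = (if n ∈ S then 1 else 0) :=
      if_congr (hper n) rfl rfl
    omega

lemma cnt_mul_period (S : Set ℕ) (M : ℕ) (hper : ∀ n, n + M ∈ S ↔ n ∈ S) (q : ℕ) :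
    cnt S (q * M) = q * cnt S M := by
  induction q with
  | zero => simp [cnt_zero]
  | succ n ih => rw [Nat.succ_mul, cnt_add_period S M hper, ih, Nat.succ_mul]

lemma cnt_mono (S : Set ℕ) {a b : ℕ} (hab : a ≤ b) : cnt S a ≤ cnt S b :=
  Set.ncard_le_ncard (Set.inter_subset_inter_right _ (Set.Iio_subset_Iio hab))
    ((Set.finite_Iio b).inter_of_right S)

lemma tendsto_cnt_div (S : Set ℕ) (M : ℕ) (hM : 0 < M) (hper : ∀ n, n + M ∈ S ↔ n ∈ S) :
    Filter.Tendsto (fun x : ℕ => (cnt S x : ℝ) / x) Filter.atTop (nhds ((cnt S M : ℝ) / M)) := by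
  have key : ∀ x : ℕ, 1 ≤ x → |(cnt S x : ℝ) / x - (cnt S M : ℝ) / M| ≤ (cnt S M : ℝ) / x := by
    intro x hx
    set q := x / M with hq
    have h1 : q * M ≤ x := Nat.div_mul_le_self x M
    have h2 : x < q * M + M := by
      have hx2 : x % M < M := Nat.mod_lt x hM
      have h3 : q * M + x % M = x := by rw [hq, Nat.mul_comm]; exact Nat.div_add_mod x M
      omega
    have hcl : q * cnt S M ≤ cnt S x := by
      rw [← cnt_mul_period S M hper q]; exact cnt_mono S h1
    have hcu : cnt S x ≤ q * cnt S M + cnt S M := by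
      have := cnt_mono S (le_of_lt h2)
      rwa [cnt_add_period S M hper, cnt_mul_period S M hper] at this
    have hxpos : (0:ℝ) < x := by exact_mod_cast hx
    have hMR : (0:ℝ) < M := by exact_mod_cast hM
    have hclR : (q:ℝ) * cnt S M ≤ cnt S x := by exact_mod_cast hcl
    have hcuR : (cnt S x : ℝ) ≤ q * cnt S M + cnt S M := by exact_mod_cast hcu
    have h1R : (q:ℝ) * M ≤ x := by exact_mod_cast h1
    have h2R : (x:ℝ) < q * M + M := by exact_mod_cast h2
    have hcMnn : (0:ℝ) ≤ cnt S M := Nat.cast_nonneg _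
    have hqnn : (0:ℝ) ≤ q := Nat.cast_nonneg _
    have key1 : (cnt S x : ℝ) * M ≤ cnt S M * x + cnt S M * M := by
      nlinarith [mul_le_mul_of_nonneg_right hcuR hMR.le, mul_le_mul_of_nonneg_right h1R hcMnn]
    have key2 : (cnt S M : ℝ) * x ≤ (cnt S x : ℝ) * M + cnt S M * M := by
      nlinarith [mul_le_mul_of_nonneg_right hclR hMR.le, mul_le_mul_of_nonneg_right h2R.le hcMnn]
    rw [abs_sub_le_iff]
    constructor
    · rw [sub_le_iff_le_add, div_add_div _ _ (ne_of_gt hxpos) (ne_of_gt hMR),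
        div_le_div_iff₀ hxpos (mul_pos hxpos hMR)]
      nlinarith [mul_le_mul_of_nonneg_right key1 hxpos.le]
    · rw [sub_le_iff_le_add, div_add_div _ _ (ne_of_gt hxpos) (ne_of_gt hxpos),
        div_le_div_iff₀ hMR (mul_pos hxpos hxpos)]
      nlinarith [mul_le_mul_of_nonneg_right key2 hxpos.le]
  have h0 : Filter.Tendsto (fun x : ℕ => (cnt S x : ℝ) / x - (cnt S M : ℝ) / M)
      Filter.atTop (nhds 0) := by
    apply squeeze_zero_norm' (a := fun x : ℕ => (cnt S M : ℝ) / x)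
    · filter_upwards [eventually_ge_atTop 1] with x hx using key x hx
    · exact tendsto_const_div_atTop_nhds_zero_nat _
  have h1 := h0.add_const ((cnt S M : ℝ) / M)
  simpa using h1

lemma keyAnalytic : ¬ Summable (fun n : ℕ => if n.Prime ∧ n % 4 = 3 then (1:ℝ)/n else 0) := by
  intro hf
  have ha : IsUnit (3 : ZMod 4) := by decide
  obtain ⟨Cl, hCl⟩ := ArithmeticFunction.vonMangoldt.LSeries_residueClass_lower_bound (q := 4) ha
  set R : ℕ → ℝ := ArithmeticFunction.vonMangoldt.residueClass (3 : ZMod 4) with hR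
  have hRnonneg : ∀ n, 0 ≤ R n :=
    ArithmeticFunction.vonMangoldt.residueClass_nonneg _
  have hRmem : ∀ n : ℕ, n % 4 = 3 → R n = ArithmeticFunction.vonMangoldt n := by
    intro n h
    apply Set.indicator_of_mem
    show (n : ZMod 4) = 3
    rw [← ZMod.natCast_mod, h]; rfl
  have hRnot : ∀ n : ℕ, n % 4 ≠ 3 → R n = 0 := by
    intro n h
    apply Set.indicator_of_notMem
    intro hmem
    apply h
    have : ((n : ZMod 4)).val = (3 : ZMod 4).val := congrArg ZMod.val hmem
    rwa [ZMod.val_natCast] at this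
  set e : ℕ → ℝ := fun k => 1/(k+1) with he
  have hepos : ∀ k, 0 < e k := fun k => by positivity
  have hele : ∀ k, e k ≤ 1 := by
    intro k
    rw [he, div_le_one (by positivity)]
    have : (0:ℝ) ≤ k := Nat.cast_nonneg k
    linarith
  set X : ℕ → ℝ := fun k => 1 + e k with hX
  have hxmem : ∀ k, X k ∈ Set.Ioc (1:ℝ) 2 := by
    intro k
    constructor
    · have := hepos k; simp only [hX]; linarith
    · have := hele k; simp only [hX]; linarith
  set F : ℕ → ℕ → ℝ := fun k n => e k * (R n / (n:ℝ) ^ (X k)) with hF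
  set bound : ℕ → ℝ := fun n =>
    (Real.exp 1)⁻¹ * (if n.Prime ∧ n % 4 = 3 then (1:ℝ)/n else 0)
      + (if n.Prime then 0 else R n)/n with hbound
  have hbsum : Summable bound :=
    (hf.mul_left _).add (ArithmeticFunction.vonMangoldt.summable_residueClass_non_primes_div _)
  have hFnn : ∀ k n, 0 ≤ F k n := by
    intro k n
    have := hRnonneg n
    have := hepos k
    have : (0:ℝ) ≤ (n:ℝ) ^ (X k) := Real.rpow_nonneg (Nat.cast_nonneg n) _
    positivity
  have hboundnn : ∀ n, 0 ≤ bound n := by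
    intro n
    apply add_nonneg
    · apply mul_nonneg (by positivity)
      split
      · positivity
      · exact le_rfl
    · apply div_nonneg _ (Nat.cast_nonneg n)
      split
      · exact le_rfl
      · exact hRnonneg n
  have hediv : Filter.Tendsto e Filter.atTop (nhds 0) := by
    exact tendsto_one_div_add_atTop_nhds_zero_nat
  have hpt : ∀ n, Filter.Tendsto (fun k => F k n) Filter.atTop (nhds 0) := by
    intro n
    apply squeeze_zero_norm (a := fun k => e k * R n)
    · intro k
      rw [Real.norm_eq_abs, abs_of_nonneg (hFnn k n)]
      rcases Nat.eq_zero_or_pos n with rfl | hn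
      · have hz : R 0 = 0 := ArithmeticFunction.vonMangoldt.residueClass_apply_zero _
        simp [hF, hz]
      · have hn1 : (1:ℝ) ≤ n := by exact_mod_cast hn
        have hpow : (1:ℝ) ≤ (n:ℝ) ^ (X k) := by
          calc (1:ℝ) = (n:ℝ) ^ (0:ℝ) := (Real.rpow_zero _).symm
            _ ≤ (n:ℝ) ^ (X k) := Real.rpow_le_rpow_of_exponent_le hn1
                (by have := hepos k; simp only [hX]; linarith)
        exact mul_le_mul_of_nonneg_left (div_le_self (hRnonneg n) hpow) (hepos k).le
    · have := hediv.mul_const (R n)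
      rwa [zero_mul] at this
  have hbd : ∀ k n, ‖F k n‖ ≤ bound n := by
    intro k n
    rw [Real.norm_eq_abs, abs_of_nonneg (hFnn k n)]
    by_cases hp : n.Prime
    · by_cases h3 : n % 4 = 3
      · have hn2 : 2 ≤ n := hp.two_le
        have hnpos : (0:ℝ) < n := by exact_mod_cast Nat.lt_of_lt_of_le Nat.zero_lt_two hn2
        have hn1 : (1:ℝ) ≤ n := by exact_mod_cast Nat.one_le_of_lt hn2
        have hRn : R n = Real.log n := by
          rw [hRmem n h3, ArithmeticFunction.vonMangoldt_apply_prime hp]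
        have hlog : 0 ≤ Real.log n := Real.log_nonneg hn1
        have hsplit : (n:ℝ) ^ (X k) = n * (n:ℝ) ^ (e k) := by
          rw [show X k = 1 + e k from rfl, Real.rpow_add hnpos, Real.rpow_one]
        have hrpos : (0:ℝ) < (n:ℝ) ^ (e k) := Real.rpow_pos_of_pos hnpos _
        have hkey : e k * Real.log n * ((n:ℝ) ^ (e k))⁻¹ ≤ (Real.exp 1)⁻¹ := by
          set t := e k * Real.log n with ht
          have htnn : 0 ≤ t := mul_nonneg (hepos k).le hlog
          have hrw : ((n:ℝ) ^ (e k)) = Real.exp (Real.log n * e k) :=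
            Real.rpow_def_of_pos hnpos _
          have h5 : t ≤ Real.exp (t - 1) := by
            have := Real.add_one_le_exp (t - 1); linarith
          rw [hrw, ← Real.exp_neg]
          have hmc : Real.log n * e k = t := by rw [ht]; ring
          rw [hmc]
          calc t * Real.exp (-t) ≤ Real.exp (t - 1) * Real.exp (-t) :=
                mul_le_mul_of_nonneg_right h5 (Real.exp_nonneg _)
            _ = Real.exp (-1) := by rw [← Real.exp_add]; ring_nf
            _ = (Real.exp 1)⁻¹ := Real.exp_neg 1
        have hbndeq : bound n = (Real.exp 1)⁻¹ * (1/n) := by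
          simp [hbound, hp, h3]
        rw [hbndeq]
        have hFeq : F k n = (e k * Real.log n * ((n:ℝ) ^ (e k))⁻¹) * (1/(n:ℝ)) := by
          rw [hF]
          simp only
          rw [hRn, hsplit, div_eq_mul_inv, mul_inv, one_div]
          ring
        rw [hFeq]
        apply mul_le_mul_of_nonneg_right hkey (by positivity)
      · have : R n = 0 := hRnot n h3
        have hFz : F k n = 0 := by rw [hF]; simp [this]
        rw [hFz]; exact hboundnn n
    · rcases Nat.eq_zero_or_pos n with rfl | hn
      · have hFz : F k 0 = 0 := by
          rw [hF]; simp [hR, ArithmeticFunction.vonMangoldt.residueClass_apply_zero]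
        rw [hFz]; exact hboundnn 0
      · have hn1 : (1:ℝ) ≤ n := by exact_mod_cast hn
        have hnpos : (0:ℝ) < n := by linarith
        have hb2 : bound n = (Real.exp 1)⁻¹ * (if n.Prime ∧ n % 4 = 3 then (1:ℝ)/n else 0)
            + R n / n := by simp [hbound, hp]
        rw [hb2]
        have h6 : F k n ≤ R n / n := by
          have hpow : (n:ℝ) ≤ (n:ℝ) ^ (X k) := by
            calc (n:ℝ) = (n:ℝ) ^ (1:ℝ) := (Real.rpow_one _).symm
              _ ≤ (n:ℝ) ^ (X k) := Real.rpow_le_rpow_of_exponent_le hn1 (hxmem k).1.le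
          have hdiv : R n / (n:ℝ) ^ (X k) ≤ R n / n :=
            div_le_div_of_nonneg_left (hRnonneg n) hnpos hpow
          calc F k n = e k * (R n / (n:ℝ) ^ (X k)) := rfl
            _ ≤ 1 * (R n / n) := by
                apply mul_le_mul (hele k) hdiv _ zero_le_one
                exact div_nonneg (hRnonneg n) (Real.rpow_nonneg (Nat.cast_nonneg n) _)
            _ = R n / n := one_mul _
        have h7 : 0 ≤ (Real.exp 1)⁻¹ * (if n.Prime ∧ n % 4 = 3 then (1:ℝ)/n else 0) := by
          apply mul_nonneg (by positivity)
          split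
          · positivity
          · exact le_rfl
        linarith
  have hmain := tendsto_tsum_of_dominated_convergence hbsum hpt (Filter.Eventually.of_forall hbd)
  rw [tsum_zero] at hmain
  have hlow : ∀ k, 1/2 - e k * Cl ≤ ∑' n, F k n := by
    intro k
    have h1 : ∑' n, F k n = e k * ∑' n, R n / (n:ℝ) ^ (X k) := tsum_mul_left
    have h2 := hCl (hxmem k)
    have htot4 : Nat.totient 4 = 2 := by decide
    have htot : ((Nat.totient 4 : ℕ) : ℝ) = 2 := by rw [htot4]; norm_num
    rw [htot] at h2
    have hxk : X k - 1 = e k := by simp [hX]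
    rw [hxk] at h2
    have h3 := mul_le_mul_of_nonneg_left h2 (hepos k).le
    rw [← h1] at h3
    have h4 : e k * ((2:ℝ)⁻¹ / e k - Cl) = 1/2 - e k * Cl := by
      field_simp
      rw [mul_sub, mul_one_div_cancel (hepos k).ne']
      ring
    linarith [h3, h4.symm.le, h4.le]
  have hhalf : (1:ℝ)/2 ≤ 0 := by
    have hlhs : Filter.Tendsto (fun k => 1/2 - e k * Cl) Filter.atTop (nhds (1/2)) := by
      have h9 := (hediv.mul_const Cl).const_sub (1/2 : ℝ)
      rw [zero_mul, sub_zero] at h9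
      exact h9
    exact le_of_tendsto_of_tendsto' hlhs hmain hlow
  linarith


open scoped Classical in
lemma cnt_bound (p : ℕ → ℕ) (hp : ∀ i, (p i).Prime ∧ p i % 4 = 3)
    (hinj : Function.Injective p) (N : ℕ) :
    cnt {n : ℕ | n % 4 = 1 ∧ ∀ i ∈ Finset.range N, ¬ (p i ∣ n)}
      (4 * ∏ i ∈ Finset.range N, p i) ≤ ∏ i ∈ Finset.range N, (p i - 1) := by
  set S : Set ℕ := {n : ℕ | n % 4 = 1 ∧ ∀ i ∈ Finset.range N, ¬ (p i ∣ n)} with hS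
  set M : ℕ := 4 * ∏ i ∈ Finset.range N, p i with hM
  rw [cnt_eq_card]
  have hppos : ∀ i, 0 < p i := fun i => (hp i).1.pos
  have hcard := Finset.card_le_card_of_injOn
    (s := (Finset.range M).filter (fun n => n ∈ S))
    (t := (Finset.range N).pi (fun i => (Finset.range (p i)).erase 0))
    (fun r => (fun i _ => r % p i)) ?_ ?_
  · have hpic : ((Finset.range N).pi (fun i => (Finset.range (p i)).erase 0)).card
        = ∏ i ∈ Finset.range N, (p i - 1) := by
      rw [Finset.card_pi]
      apply Finset.prod_congr rfl
      intro i _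
      rw [Finset.card_erase_of_mem (Finset.mem_range.mpr (hppos i)), Finset.card_range]
    rw [← hpic]
    convert hcard using 2
    exact Finset.filter_congr_decidable _ _ _
  · intro r hr
    rw [Finset.mem_coe, Finset.mem_filter, Finset.mem_range] at hr
    rw [Finset.mem_coe, Finset.mem_pi]
    intro i hi
    rw [Finset.mem_erase, Finset.mem_range]
    refine ⟨?_, Nat.mod_lt r (hppos i)⟩
    intro h0
    exact hr.2.2 i hi (Nat.dvd_of_mod_eq_zero h0)
  · have main : ∀ a b : ℕ, a ∈ (Finset.range M).filter (fun n => n ∈ S) →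
        b ∈ (Finset.range M).filter (fun n => n ∈ S) → a ≤ b →
        (∀ i ∈ Finset.range N, a % p i = b % p i) → a = b := by
      intro a b ha hb hle hmods
      simp only [Finset.mem_filter, Finset.mem_range, hS, Set.mem_setOf_eq] at ha hb
      obtain ⟨haM, ha4, hadv⟩ := ha
      obtain ⟨hbM, hb4, hbdv⟩ := hb
      have h4 : 4 ∣ b - a := by
        refine (Nat.modEq_iff_dvd' hle).mp ?_
        show a % 4 = b % 4
        rw [ha4, hb4]
      have hpi : ∀ i ∈ Finset.range N, p i ∣ b - a := by
        intro i hi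
        refine (Nat.modEq_iff_dvd' hle).mp ?_
        exact hmods i hi
      have hP : (∏ i ∈ Finset.range N, p i) ∣ b - a := by
        have himg : ∏ q ∈ (Finset.range N).image p, q ∣ b - a := by
          apply Finset.prod_primes_dvd
          · intro q hq
            obtain ⟨i, _, rfl⟩ := Finset.mem_image.mp hq
            exact (hp i).1.prime
          · intro q hq
            obtain ⟨i, hi, rfl⟩ := Finset.mem_image.mp hq
            exact hpi i hi
        rwa [Finset.prod_image (fun i _ j _ h => hinj h)] at himg
      have hcop : Nat.Coprime (∏ i ∈ Finset.range N, p i) 4 := by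
        apply Nat.Coprime.prod_left
        intro i _
        apply ((hp i).1.coprime_iff_not_dvd).mpr
        intro hd
        have h2 : p i ∣ 2 := (hp i).1.dvd_of_dvd_pow (n := 2) (by norm_num; exact hd)
        have := (Nat.prime_dvd_prime_iff_eq (hp i).1 Nat.prime_two).mp h2
        have := (hp i).2
        omega
      have hMd : M ∣ b - a := by
        rw [hM]
        exact Nat.Coprime.mul_dvd_of_dvd_of_dvd hcop.symm h4 hP
      have hlt : b - a < M := by omega
      have := Nat.eq_zero_of_dvd_of_lt hMd hlt
      omega
    intro a ha b hb hab
    rw [Finset.mem_coe] at ha hb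
    have hmods : ∀ i ∈ Finset.range N, a % p i = b % p i := by
      intro i hi
      exact congrFun (congrFun hab i) hi
    rcases le_total a b with h | h
    · exact main a b ha hb h hmods
    · exact (main b a hb ha h (fun i hi => (hmods i hi).symm)).symm

theorem stmt_12
    (A B : Set ℕ) (hA : A = {n : ℕ | 0 < n ∧ n % 4 = 3}) (hB : B = {n : ℕ | 0 < n ∧ n % 4 = 1})
    (p : ℕ → ℕ) (hpmono : StrictMono p)
    (hp : ∀ i, (p i).Prime ∧ p i % 4 = 3)
    (hpall : ∀ q : ℕ, q.Prime → q % 4 = 3 → ∃ i, p i = q)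
    (C : ℕ → Set ℕ)
    (hC : ∀ N, C N = B \ ⋃ i ∈ Finset.range N, (fun a => p i * a) '' A) :
    ∃ α : ℕ → ℝ, (∀ N, relDensity (C N) B (α N)) ∧ Tendsto α atTop (nhds 0) := by
  have hQpos : ∀ N, 0 < ∏ i ∈ Finset.range N, p i :=
    fun N => Finset.prod_pos (fun i _ => (hp i).1.pos)
  set Q : ℕ → ℕ := fun N => ∏ i ∈ Finset.range N, p i with hQ
  set M : ℕ → ℕ := fun N => 4 * Q N with hM
  have hMpos : ∀ N, 0 < M N := fun N => Nat.mul_pos (by norm_num) (hQpos N)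
  have hCeq : ∀ N, C N = {n : ℕ | n % 4 = 1 ∧ ∀ i ∈ Finset.range N, ¬ (p i ∣ n)} := by
    intro N
    rw [hC, hB, hA]
    ext n
    constructor
    · rintro ⟨hmem, hnot⟩
      obtain ⟨hn0, hn1⟩ := hmem
      refine ⟨hn1, fun i hi hdvd => ?_⟩
      obtain ⟨m, hm⟩ := hdvd
      have hm0 : 0 < m := by
        rcases Nat.eq_zero_or_pos m with rfl | h
        · omega
        · exact h
      have hm3 : m % 4 = 3 := by
        have h1 := (hp i).2
        have hmn : n % 4 = (p i % 4) * (m % 4) % 4 := by rw [hm, Nat.mul_mod]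
        rw [h1] at hmn
        omega
      exact hnot (Set.mem_iUnion₂.mpr ⟨i, hi, ⟨m, ⟨hm0, hm3⟩, hm.symm⟩⟩)
    · rintro ⟨hn1, hnd⟩
      refine ⟨⟨by omega, hn1⟩, fun hmem => ?_⟩
      obtain ⟨i, hi, m, hmA, hmeq⟩ := Set.mem_iUnion₂.mp hmem
      exact hnd i hi ⟨m, hmeq.symm⟩
  have hBeq : B = {n : ℕ | n % 4 = 1} := by
    rw [hB]
    ext n
    simp only [Set.mem_setOf_eq]
    omega
  have hBper : ∀ n, n + 4 ∈ B ↔ n ∈ B := by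
    intro n
    rw [hBeq]
    simp only [Set.mem_setOf_eq]
    omega
  have hCper : ∀ N n, n + M N ∈ C N ↔ n ∈ C N := by
    intro N n
    rw [hCeq N]
    simp only [Set.mem_setOf_eq]
    have h4 : (n + M N) % 4 = n % 4 := by
      rw [show M N = 4 * Q N from rfl]
      rw [Nat.add_mul_mod_self_left]
    have hdvd : ∀ i ∈ Finset.range N, (p i ∣ n + M N ↔ p i ∣ n) := by
      intro i hi
      have hdM : p i ∣ M N := Dvd.dvd.mul_left (Finset.dvd_prod_of_mem p hi) 4
      constructor
      · intro h
        have := Nat.dvd_sub h hdM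
        rwa [Nat.add_sub_cancel] at this
      · intro h
        exact Nat.dvd_add h hdM
    constructor
    · rintro ⟨h1, h2⟩
      exact ⟨by omega, fun i hi => fun hd => h2 i hi ((hdvd i hi).mpr hd)⟩
    · rintro ⟨h1, h2⟩
      exact ⟨by omega, fun i hi => fun hd => h2 i hi ((hdvd i hi).mp hd)⟩
  have hcntB : cnt B 4 = 1 := by
    rw [hBeq]
    have heq : ({n : ℕ | n % 4 = 1} ∩ Set.Iio 4) = {1} := by
      ext n
      simp only [Set.mem_inter_iff, Set.mem_setOf_eq, Set.mem_Iio, Set.mem_singleton_iff]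
      omega
    rw [cnt, heq, Set.ncard_singleton]
  set α : ℕ → ℝ := fun N => ((cnt (C N) (M N) : ℝ)/(M N)) / ((cnt B 4 : ℝ)/4) with hα
  refine ⟨α, fun N => ?_, ?_⟩
  · have h1 := tendsto_cnt_div (C N) (M N) (hMpos N) (hCper N)
    have h2 := tendsto_cnt_div B 4 (by norm_num) hBper
    have hne : ((cnt B 4 : ℝ)/4) ≠ 0 := by rw [hcntB]; norm_num
    have h3 := h1.div h2 hne
    apply Filter.Tendsto.congr' _ h3
    filter_upwards [eventually_ge_atTop 1] with x hx
    have hx0 : (x:ℝ) ≠ 0 := by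
      have : (1:ℝ) ≤ x := by exact_mod_cast hx
      linarith
    have hcancel : (cnt (C N) x : ℝ)/x/((cnt B x : ℝ)/x) = (cnt (C N) x : ℝ)/(cnt B x : ℝ) := by
      rw [div_div_div_cancel_right₀]
      exact hx0
    exact hcancel
  · have hp1 : ∀ i, (1:ℝ) ≤ p i := fun i => by exact_mod_cast (hp i).1.one_lt.le
    have hppos : ∀ i, (0:ℝ) < p i := fun i => by
      exact_mod_cast (hp i).1.pos
    set β : ℕ → ℝ := fun N => ∏ i ∈ Finset.range N, (((p i : ℝ) - 1)/(p i)) with hβ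
    have hαβ : ∀ N, α N ≤ β N := by
      intro N
      have hK : (cnt (C N) (M N) : ℝ) ≤ ∏ i ∈ Finset.range N, ((p i : ℝ) - 1) := by
        have h5 : cnt (C N) (M N) ≤ ∏ i ∈ Finset.range N, (p i - 1) := by
          rw [hCeq N]
          exact cnt_bound p hp hpmono.injective N
        calc (cnt (C N) (M N) : ℝ) ≤ ((∏ i ∈ Finset.range N, (p i - 1) : ℕ) : ℝ) := by
              exact_mod_cast h5
          _ = ∏ i ∈ Finset.range N, ((p i : ℝ) - 1) := by
              rw [Nat.cast_prod]
              apply Finset.prod_congr rfl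
              intro i _
              rw [Nat.cast_sub (hp i).1.pos]
              norm_num
      have hQR : (0:ℝ) < Q N := by exact_mod_cast hQpos N
      have hQne : (Q N : ℝ) ≠ 0 := hQR.ne'
      have hαeq : α N = (cnt (C N) (M N) : ℝ) / Q N := by
        simp only [hα]
        rw [hcntB]
        have hMR : ((M N : ℕ) : ℝ) = 4 * (Q N : ℝ) := by
          rw [show M N = 4 * Q N from rfl]
          push_cast
          ring
        rw [hMR, Nat.cast_one]
        field_simp
      rw [hαeq]
      simp only [hβ]
      have hprodQ : (Q N : ℝ) = ∏ i ∈ Finset.range N, (p i : ℝ) := by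
        simp only [hQ]
        push_cast
        rfl
      rw [Finset.prod_div_distrib, ← hprodQ]
      gcongr
    have hβnn : ∀ N, 0 ≤ β N := fun N =>
      Finset.prod_nonneg fun i _ => div_nonneg (by have := hp1 i; linarith) (hppos i).le
    have hnotsum : ¬ Summable (fun i => 1/(p i : ℝ)) := by
      intro hs
      have hvan : ∀ n ∉ Set.range p,
          (fun n : ℕ => if n.Prime ∧ n % 4 = 3 then (1:ℝ)/n else 0) n = 0 := by
        intro n hn
        by_cases h : n.Prime ∧ n % 4 = 3
        · exact absurd (let ⟨i, hi⟩ := hpall n h.1 h.2; ⟨i, hi⟩ : n ∈ Set.range p) hn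
        · simp [h]
      have hcomp : Summable ((fun n : ℕ => if n.Prime ∧ n % 4 = 3 then (1:ℝ)/n else 0) ∘ p) := by
        apply hs.congr
        intro i
        simp [Function.comp, (hp i).1, (hp i).2]
      exact keyAnalytic ((hpmono.injective.summable_iff hvan).mp hcomp)
    have hSdiv : Tendsto (fun N => ∑ i ∈ Finset.range N, 1/(p i:ℝ)) atTop atTop :=
      (not_summable_iff_tendsto_nat_atTop_of_nonneg (fun i => by positivity)).mp hnotsum
    have hβle : ∀ N, β N ≤ Real.exp (-(∑ i ∈ Finset.range N, 1/(p i:ℝ))) := by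
      intro N
      simp only [hβ]
      rw [← Finset.sum_neg_distrib, Real.exp_sum]
      apply Finset.prod_le_prod
      · intro i _
        exact div_nonneg (by have := hp1 i; linarith) (hppos i).le
      · intro i _
        have hne : (p i:ℝ) ≠ 0 := (hppos i).ne'
        have heq : ((p i:ℝ) - 1)/(p i) = 1 - 1/(p i) := by
          field_simp
        rw [heq]
        have := Real.add_one_le_exp (-(1/(p i:ℝ)))
        linarith
    have hexp : Tendsto (fun N => Real.exp (-(∑ i ∈ Finset.range N, 1/(p i:ℝ)))) atTop (nhds 0) :=
      Real.tendsto_exp_atBot.comp (Filter.tendsto_neg_atBot_iff.mpr hSdiv)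
    have hβ0 : Tendsto β atTop (nhds 0) := squeeze_zero hβnn hβle hexp
    have hαnn : ∀ N, 0 ≤ α N := by
      intro N
      simp only [hα]
      positivity
    exact squeeze_zero hαnn hαβ hβ0
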